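/- Let A = ℤ⟨X,Y⟩. Then (XY − YX)² + 2(−XYXY + XXYY) does not lie in the additive subgroup A₄⁰ + F⁵A + 2A. (Indeed this element is congruent to −XYXY + YXYX modulo A₄⁰ + F⁵A + 2A.) -/

import Mathlib

/-- Words in the two letters `X, Y`. -/
abbrev FW := FreeMonoid (Fin 2)

/-- `A = ℤ⟨X,Y⟩`. -/
abbrev A2 := MonoidAlgebra ℤ FW

/-- The variable `X`. -/
noncomputable def Xv : A2 := MonoidAlgebra.of ℤ FW (FreeMonoid.of 0)

/-- The variable `Y`. -/
noncomputable def Yv : A2 := MonoidAlgebra.of ℤ FW (FreeMonoid.of 1)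

/-- The word `XYXY`. -/
def wXYXY : FW := FreeMonoid.of 0 * FreeMonoid.of 1 * FreeMonoid.of 0 * FreeMonoid.of 1

/-- The word `YXYX`. -/
def wYXYX : FW := FreeMonoid.of 1 * FreeMonoid.of 0 * FreeMonoid.of 1 * FreeMonoid.of 0

/-- Generators of `A₄⁰`: all words of length `4` except `XYXY` and `YXYX`. -/
def A40set : Set A2 :=
  {x | ∃ w : FW, w.length = 4 ∧ w ≠ wXYXY ∧ w ≠ wYXYX ∧ x = MonoidAlgebra.of ℤ FW w}

/-- The words of length `≥ n`; they generate `FⁿA = ⊕_{i≥n} A_i` as an additive group. -/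
def FdegSet (n : ℕ) : Set A2 :=
  {x | ∃ w : FW, n ≤ w.length ∧ x = MonoidAlgebra.of ℤ FW w}

/-- The set `2A`. -/
def twoA : Set A2 := {x | ∃ a : A2, x = 2 * a}

/-- `H := A₄⁰ + F⁵A + 2A`, as the additive subgroup generated by the union. -/
noncomputable def Hsub : AddSubgroup A2 := AddSubgroup.closure (A40set ∪ FdegSet 5 ∪ twoA)

instance : DecidableEq FW :=
  fun a b => decidable_of_iff (a.toList = b.toList) FreeMonoid.toList.injective.eq_iff

/-- Coefficient at `XYXY` modulo `2`, as an additive homomorphism. -/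
noncomputable def φ : A2 →+ ZMod 2 :=
  AddMonoidHom.mk' (fun x => ((x.coeff wXYXY : ℤ) : ZMod 2)) (by
    intro a b
    show ((((a + b) : A2).coeff wXYXY : ℤ) : ZMod 2) = _
    rw [MonoidAlgebra.coeff_add, Finsupp.add_apply]; push_cast; ring)

lemma φ_single' (w : FW) : φ (MonoidAlgebra.single w (1 : ℤ)) = if w = wXYXY then 1 else 0 := by
  simp only [φ, AddMonoidHom.mk'_apply, MonoidAlgebra.single_apply]
  split <;> simp

lemma φ_single (w : FW) : φ (MonoidAlgebra.of ℤ FW w) = if w = wXYXY then 1 else 0 := by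
  rw [MonoidAlgebra.of_apply, φ_single']

lemma φ_two (a : A2) : φ (2 * a) = 0 := by
  rw [two_mul, map_add]
  have : (2 : ZMod 2) = 0 := by decide
  calc φ a + φ a = 2 * φ a := by ring
    _ = 0 := by rw [this, zero_mul]

lemma φ_Hsub : ∀ x ∈ Hsub, φ x = 0 := by
  have h : Hsub ≤ φ.ker := by
    rw [Hsub, AddSubgroup.closure_le]
    rintro x ((⟨w, _, hne, _, rfl⟩ | ⟨w, hlen, rfl⟩) | ⟨a, rfl⟩)
    · simp [AddMonoidHom.mem_ker, φ_single', hne]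
    · have hne : w ≠ wXYXY := by
        intro h; subst h; revert hlen; decide
      simp [AddMonoidHom.mem_ker, φ_single', hne]
    · simp [AddMonoidHom.mem_ker, φ_two]
  intro x hx
  exact h hx

/-- `(XY − YX)² + 2(−XYXY + XXYY)` does not lie in `A₄⁰ + F⁵A + 2A`; indeed
this element is congruent to `−XYXY + YXYX` modulo `A₄⁰ + F⁵A + 2A`. -/
theorem stmt17 :
    ((Xv * Yv - Yv * Xv) ^ 2 + 2 * (-(Xv * Yv * Xv * Yv) + Xv * Xv * Yv * Yv) ∉ Hsub) ∧
    ((Xv * Yv - Yv * Xv) ^ 2 + 2 * (-(Xv * Yv * Xv * Yv) + Xv * Xv * Yv * Yv)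
      - (-(Xv * Yv * Xv * Yv) + Yv * Xv * Yv * Xv) ∈ Hsub) := by
  set o := MonoidAlgebra.of ℤ FW with ho
  have hmul : ∀ w w' : FW, o w * o w' = o (w * w') := fun w w' => (map_mul o w w').symm
  -- names for the words involved
  set wXYYX : FW := FreeMonoid.of 0 * FreeMonoid.of 1 * FreeMonoid.of 1 * FreeMonoid.of 0 with hw1
  set wYXXY : FW := FreeMonoid.of 1 * FreeMonoid.of 0 * FreeMonoid.of 0 * FreeMonoid.of 1 with hw2
  set wXXYY : FW := FreeMonoid.of 0 * FreeMonoid.of 0 * FreeMonoid.of 1 * FreeMonoid.of 1 with hw3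
  have hXY : Xv * Yv * Xv * Yv = o wXYXY := by
    simp [Xv, Yv, ho, hmul, wXYXY, mul_assoc]
  have hYX : Yv * Xv * Yv * Xv = o wYXYX := by
    simp [Xv, Yv, ho, hmul, wYXYX, mul_assoc]
  have hXYYX : Xv * Yv * Yv * Xv = o wXYYX := by
    simp [Xv, Yv, ho, hmul, hw1, mul_assoc]
  have hYXXY : Yv * Xv * Xv * Yv = o wYXXY := by
    simp [Xv, Yv, ho, hmul, hw2, mul_assoc]
  have hXXYY : Xv * Xv * Yv * Yv = o wXXYY := by
    simp [Xv, Yv, ho, hmul, hw3, mul_assoc]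
  have hsq : (Xv * Yv - Yv * Xv) ^ 2 =
      Xv * Yv * Xv * Yv - Xv * Yv * Yv * Xv - Yv * Xv * Xv * Yv + Yv * Xv * Yv * Xv := by
    noncomm_ring
  -- the difference lies in Hsub
  have hdiff : (Xv * Yv - Yv * Xv) ^ 2 + 2 * (-(Xv * Yv * Xv * Yv) + Xv * Xv * Yv * Yv)
      - (-(Xv * Yv * Xv * Yv) + Yv * Xv * Yv * Xv)
      = 2 * o wXXYY - o wXYYX - o wYXXY := by
    rw [hsq, hXY, hYX, hXYYX, hYXXY, hXXYY]; noncomm_ring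
  have h1 : o wXYYX ∈ Hsub := by
    apply AddSubgroup.subset_closure
    exact Or.inl (Or.inl ⟨wXYYX, by decide, by decide, by decide, rfl⟩)
  have h2 : o wYXXY ∈ Hsub := by
    apply AddSubgroup.subset_closure
    exact Or.inl (Or.inl ⟨wYXXY, by decide, by decide, by decide, rfl⟩)
  have h3 : (2 : A2) * o wXXYY ∈ Hsub := by
    apply AddSubgroup.subset_closure
    exact Or.inr ⟨o wXXYY, rfl⟩
  have hmem : (Xv * Yv - Yv * Xv) ^ 2 + 2 * (-(Xv * Yv * Xv * Yv) + Xv * Xv * Yv * Yv)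
      - (-(Xv * Yv * Xv * Yv) + Yv * Xv * Yv * Xv) ∈ Hsub := by
    rw [hdiff]
    exact AddSubgroup.sub_mem _ (AddSubgroup.sub_mem _ h3 h1) h2
  refine ⟨?_, hmem⟩
  intro hcon
  -- then  -XYXY + YXYX  would be in Hsub, but φ of it is 1 ≠ 0
  have hrest : -(Xv * Yv * Xv * Yv) + Yv * Xv * Yv * Xv ∈ Hsub := by
    have := AddSubgroup.sub_mem _ hcon hmem
    simpa using this
  have hφ : φ (-(Xv * Yv * Xv * Yv) + Yv * Xv * Yv * Xv) = 0 := φ_Hsub _ hrest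
  rw [map_add, map_neg, hXY, hYX, φ_single, φ_single] at hφ
  have e1 : wXYXY = wXYXY := rfl
  have e2 : wYXYX ≠ wXYXY := by decide
  rw [if_pos e1, if_neg e2] at hφ
  simp at hφ
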